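/- Let Ω be a separable metric space, {p_n} a p-chaotic sequence of symmetric probability measures on Ω^n, and D : Ω → (density operators on H) a continuous function. Define D̄ = ∫ D(ω) p(dω) and D_n = ∫ D(ω_1) ⊗ ⋯ ⊗ D(ω_n) p_n(dω). Then for each fixed k, the partial traces Tr^{(n−k)} D_n converge to D̄^{⊗k} in the weak-* topology on trace-class operators (i.e., Tr(Tr^{(n−k)}(D_n) B) → Tr(D̄^{⊗k} B) for every bounded operator B on H^{⊗k}). -/

import Mathlib

open Filter
open scoped BigOperators ComplexOrder

namespace QC

variable {α : Type*} [Fintype α] [DecidableEq α]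

/-- The trace norm (Schatten 1-norm) of a matrix: the trace of `√(AᴴA)`. -/
noncomputable def traceNorm (A : Matrix α α ℂ) : ℝ :=
  (((Matrix.posSemidef_conjTranspose_mul_self A).1.eigenvectorUnitary : Matrix α α ℂ) *
    Matrix.diagonal (((↑) : ℝ → ℂ) ∘ (Real.sqrt ·) ∘ (Matrix.posSemidef_conjTranspose_mul_self A).1.eigenvalues) *
    (star (Matrix.posSemidef_conjTranspose_mul_self A).1.eigenvectorUnitary : Matrix α α ℂ)).trace.re

/-- A density operator: a positive semidefinite matrix of trace one. -/
def IsDensity (A : Matrix α α ℂ) : Prop := A.PosSemidef ∧ A.trace = 1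

variable {ι : Type*} [Fintype ι] [DecidableEq ι]

/-- Tensor product of `n` operators on `H`, as an operator on `H^{⊗n}`
(with `H = ℂ^ι`, and `H^{⊗n}` identified with `ℂ^(Fin n → ι)`). -/
def tprod {n : ℕ} (A : Fin n → Matrix ι ι ℂ) : Matrix (Fin n → ι) (Fin n → ι) ℂ :=
  Matrix.of fun x y => ∏ i, A i (x i) (y i)

/-- `k`-fold tensor power of an operator. -/
def tpow (A : Matrix ι ι ℂ) (k : ℕ) : Matrix (Fin k → ι) (Fin k → ι) ℂ :=
  tprod (fun _ => A)

/-- Extend a multi-index on the first `k` coordinates by one on the last `n - k`. -/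
def extend {k n : ℕ} (h : k ≤ n) (x : Fin k → ι) (z : Fin (n - k) → ι) : Fin n → ι :=
  fun i => if h' : (i : ℕ) < k then x ⟨i, h'⟩ else z ⟨(i : ℕ) - k, by
    have := i.isLt; omega⟩

/-- Partial trace over the last `n - k` tensor factors. -/
noncomputable def ptrace {k n : ℕ} (h : k ≤ n) (M : Matrix (Fin n → ι) (Fin n → ι) ℂ) :
    Matrix (Fin k → ι) (Fin k → ι) ℂ :=
  Matrix.of fun x y => ∑ z : Fin (n - k) → ι, M (extend h x z) (extend h y z)

/-- The permutation unitary `U_π` on `H^{⊗n}`, `U_π (x₁ ⊗ ⋯ ⊗ xₙ) = x_{π(1)} ⊗ ⋯ ⊗ x_{π(n)}`. -/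
def Umat {n : ℕ} (π : Equiv.Perm (Fin n)) : Matrix (Fin n → ι) (Fin n → ι) ℂ :=
  Matrix.of fun x y => if x = y ∘ π then 1 else 0

/-- `{D n}` is `E`-chaotic in the quantum sense: for each fixed `k` the `k`-marginals
(partial traces) converge in trace norm to `E^{⊗k}`. -/
def QChaotic (D : ∀ n, Matrix (Fin n → ι) (Fin n → ι) ℂ) (E : Matrix ι ι ℂ) : Prop :=
  ∀ k : ℕ, Tendsto
    (fun n => traceNorm (ptrace (Nat.le_add_right k n) (D (k + n)) - tpow E k))
    atTop (nhds 0)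

open MeasureTheory

variable {Ω : Type*} [MeasurableSpace Ω]

/-- The `k`-marginal of a measure on `Ω^n`. -/
noncomputable def marginal {k n : ℕ} (h : k ≤ n) (μ : Measure (Fin n → Ω)) :
    Measure (Fin k → Ω) :=
  μ.map (fun x => x ∘ Fin.castLE h)

/-- A measure on `Ω^n` is symmetric if invariant under permutations of coordinates. -/
def IsSymm {n : ℕ} (μ : Measure (Fin n → Ω)) : Prop :=
  ∀ π : Equiv.Perm (Fin n), μ.map (fun x => x ∘ π) = μ

/-- `{p_n}` is `μ`-chaotic: `k`-marginals converge weakly to `μ^{⊗k}`. -/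
def IsChaotic [TopologicalSpace Ω] (p : ∀ n, Measure (Fin n → Ω)) (μ : Measure Ω) : Prop :=
  ∀ (k : ℕ) (f : BoundedContinuousFunction (Fin k → Ω) ℝ),
    Tendsto (fun n => ∫ x, f x ∂ marginal (Nat.le_add_right k n) (p (k + n)))
      atTop (nhds (∫ x, f x ∂ (Measure.pi fun _ : Fin k => μ)))

/-- The Bochner integral `∫ D(ω₁) ⊗ ⋯ ⊗ Dₙ(ωₙ) p(dω)` (computed entrywise). -/
noncomputable def encode {n : ℕ} (Dfun : Ω → Matrix ι ι ℂ) (p : Measure (Fin n → Ω)) :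
    Matrix (Fin n → ι) (Fin n → ι) ℂ :=
  Matrix.of fun x y => ∫ ω, ∏ i, Dfun (ω i) (x i) (y i) ∂ p

/-- The mean density operator `D̄ = ∫ D(ω) p(dω)` (computed entrywise). -/
noncomputable def meanDensity (Dfun : Ω → Matrix ι ι ℂ) (μ : Measure Ω) :
    Matrix ι ι ℂ :=
  Matrix.of fun a b => ∫ ω, Dfun ω a b ∂ μ

private lemma density_entry_norm_le_one {A : Matrix ι ι ℂ} (hA : IsDensity A) (a b : ι) :
    ‖A a b‖ ≤ 1 := by
  classical
  obtain ⟨hpsd, htr⟩ := hA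
  obtain ⟨B, rfl⟩ : ∃ B : Matrix ι ι ℂ, A = B.conjTranspose * B := by
    open scoped MatrixOrder in
    exact CStarAlgebra.nonneg_iff_eq_star_mul_self.mp hpsd.nonneg
  have hdiag : ∀ e : ι, ((B.conjTranspose * B) e e).re = ∑ d, ‖B d e‖ ^ 2 := by
    intro e
    simp only [Matrix.mul_apply, Matrix.conjTranspose_apply]
    rw [Complex.re_sum]
    refine Finset.sum_congr rfl fun d _ => ?_
    have h3 : star (B d e) * B d e = ((‖B d e‖ : ℂ)) ^ 2 := RCLike.conj_mul (B d e)
    rw [h3]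
    norm_cast
  have hsum : ∑ e, ((B.conjTranspose * B) e e).re = 1 := by
    have h2 := congrArg Complex.re htr
    rw [Matrix.trace] at h2
    simpa [Complex.re_sum] using h2
  have hle1 : ∀ e : ι, ∑ d, ‖B d e‖ ^ 2 ≤ 1 := by
    intro e
    rw [← hdiag e, ← hsum]
    refine Finset.single_le_sum
      (f := fun c => ((B.conjTranspose * B) c c).re) (fun c _ => ?_) (Finset.mem_univ e)
    show 0 ≤ ((B.conjTranspose * B) c c).re
    rw [hdiag c]
    positivity
  have h1 : ‖(B.conjTranspose * B) a b‖ ≤ ∑ d, ‖B d a‖ * ‖B d b‖ := by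
    rw [Matrix.mul_apply]
    refine (norm_sum_le _ _).trans (Finset.sum_le_sum fun d _ => ?_)
    rw [Matrix.conjTranspose_apply, norm_mul, norm_star]
  refine h1.trans ?_
  have hcs := Finset.sum_mul_sq_le_sq_mul_sq Finset.univ (fun d => ‖B d a‖) (fun d => ‖B d b‖)
  have hS : (0:ℝ) ≤ ∑ d, ‖B d a‖ * ‖B d b‖ :=
    Finset.sum_nonneg fun d _ => mul_nonneg (norm_nonneg _) (norm_nonneg _)
  nlinarith [hle1 a, hle1 b, Finset.sum_nonneg (fun d (_ : d ∈ Finset.univ) => sq_nonneg ‖B d a‖),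
    Finset.sum_nonneg (fun d (_ : d ∈ Finset.univ) => sq_nonneg ‖B d b‖)]

private lemma sum_pi_prod {m : ℕ} (g : Fin m → ι → ℂ) :
    ∑ z : Fin m → ι, ∏ j, g j (z j) = ∏ j, ∑ a, g j a := by
  rw [← Fintype.piFinset_univ, Finset.sum_prod_piFinset]

private lemma sum_extend_prod {k N : ℕ} (h : k ≤ N) (D : Fin N → Matrix ι ι ℂ)
    (htr : ∀ i, (D i).trace = 1) (x y : Fin k → ι) :
    ∑ z : Fin (N - k) → ι, ∏ i, D i (extend h x z i) (extend h y z i)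
      = ∏ i : Fin k, D (Fin.castLE h i) (x i) (y i) := by
  classical
  have hNk : k + (N - k) = N := by omega
  set e : Fin k ⊕ Fin (N - k) ≃ Fin N := finSumFinEquiv.trans (finCongr hNk) with he
  have key : ∀ z : Fin (N - k) → ι,
      (∏ i, D i (extend h x z i) (extend h y z i))
        = (∏ i : Fin k, D (Fin.castLE h i) (x i) (y i)) *
          ∏ j : Fin (N - k), D (e (Sum.inr j)) (z j) (z j) := by
    intro z
    rw [← Equiv.prod_comp e (fun i => D i (extend h x z i) (extend h y z i)),
      Fintype.prod_sum_type]
    congr 1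
    · refine Finset.prod_congr rfl fun i _ => ?_
      have hi : e (Sum.inl i) = Fin.castLE h i := by
        apply Fin.ext
        simp [he, finCongr]
      rw [hi]
      congr 1 <;>
      · simp only [extend, Fin.coe_castLE]
        rw [dif_pos i.isLt]
    · refine Finset.prod_congr rfl fun j _ => ?_
      have hj : ((e (Sum.inr j)) : ℕ) = k + (j : ℕ) := by
        simp [he, finCongr]
      congr 1 <;>
      · simp only [extend, hj]
        rw [dif_neg (by omega)]
        congr 1
        apply Fin.ext
        simp
  rw [Finset.sum_congr rfl fun z _ => key z, ← Finset.mul_sum,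
    sum_pi_prod (fun j a => D (e (Sum.inr j)) a a)]
  have h1 : ∀ j : Fin (N - k), ∑ a : ι, D (e (Sum.inr j)) a a = 1 := fun j => by
    simpa [Matrix.trace, Matrix.diag] using htr (e (Sum.inr j))
  rw [Finset.prod_congr rfl fun j _ => h1 j, Finset.prod_const_one, mul_one]

/-- **Encoding classical chaos as quantum states: weak-* convergence of marginals.**
Let `Ω` be a separable metric space, `{p_n}` a `μ`-chaotic sequence of symmetric
probability measures on `Ω^n`, and `D : Ω → densities` continuous. With
`D̄ = ∫ D(ω) μ(dω)` and `D_n = ∫ D(ω₁) ⊗ ⋯ ⊗ D(ωₙ) p_n(dω)`, for each fixed `k` the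
partial traces `Tr^{(n−k)} D_n` converge to `D̄^{⊗k}` in the weak-* topology, i.e.
`Tr(Tr^{(n−k)}(D_n) B) → Tr(D̄^{⊗k} B)` for every bounded operator `B` on `H^{⊗k}`. -/
theorem encode_weakStar_convergence {Ω : Type*} [MetricSpace Ω]
    [TopologicalSpace.SeparableSpace Ω] [MeasurableSpace Ω] [BorelSpace Ω]
    (Dfun : Ω → Matrix ι ι ℂ) (hcont : Continuous Dfun)
    (hdens : ∀ ω, IsDensity (Dfun ω))
    (p : ∀ n, Measure (Fin n → Ω)) (hp : ∀ n, IsProbabilityMeasure (p n))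
    (hsym : ∀ n, IsSymm (p n))
    (μ : Measure Ω) (hμ : IsProbabilityMeasure μ) (hchaos : IsChaotic p μ) :
    ∀ (k : ℕ) (B : Matrix (Fin k → ι) (Fin k → ι) ℂ),
      Tendsto
        (fun n => (ptrace (Nat.le_add_right k n) (encode Dfun (p (k + n))) * B).trace)
        atTop (nhds ((tpow (meanDensity Dfun μ) k * B).trace)) := by
  intro k B
  classical
  haveI : SecondCountableTopology Ω :=
    UniformSpace.secondCountable_of_separable Ω
  haveI := hμ
  haveI hpik : IsProbabilityMeasure (Measure.pi fun _ : Fin k => μ) := inferInstance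
  -- entries of densities are bounded by 1
  have hb : ∀ (ω : Ω) (a b : ι), ‖Dfun ω a b‖ ≤ 1 := fun ω => density_entry_norm_le_one (hdens ω)
  -- continuity of entry products
  have hcontProd : ∀ (m : ℕ) (x y : Fin m → ι),
      Continuous (fun ω : Fin m → Ω => ∏ i, Dfun (ω i) (x i) (y i)) := by
    intro m x y
    refine continuous_finset_prod _ fun i _ => ?_
    exact (hcont.comp (continuous_apply i)).matrix_elem (x i) (y i)
  -- integrability of entry products against probability measures
  have hint : ∀ (m : ℕ) (x y : Fin m → ι) (ν : Measure (Fin m → Ω)),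
      IsProbabilityMeasure ν →
      Integrable (fun ω : Fin m → Ω => ∏ i, Dfun (ω i) (x i) (y i)) ν := by
    intro m x y ν hν
    haveI := hν
    refine (integrable_const (1 : ℝ)).mono'
      ((hcontProd m x y).aestronglyMeasurable) ?_
    filter_upwards with ω
    rw [norm_prod]
    exact Finset.prod_le_one (fun i _ => norm_nonneg _) (fun i _ => hb _ _ _)
  -- the key test function
  set F : (Fin k → Ω) → ℂ := fun ω => ∑ x : Fin k → ι, ∑ y : Fin k → ι,
    (∏ i, Dfun (ω i) (x i) (y i)) * B y x with hF
  have hFint : ∀ ν : Measure (Fin k → Ω), IsProbabilityMeasure ν → Integrable F ν := by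
    intro ν hν
    exact integrable_finset_sum _ fun x _ => integrable_finset_sum _ fun y _ =>
      (hint k x y ν hν).mul_const _
  have hexp : ∀ ν : Measure (Fin k → Ω), IsProbabilityMeasure ν →
      ∫ ω, F ω ∂ν = ∑ x : Fin k → ι, ∑ y : Fin k → ι,
        (∫ ω, ∏ i, Dfun (ω i) (x i) (y i) ∂ν) * B y x := by
    intro ν hν
    rw [hF]
    rw [integral_finset_sum _ (fun x _ => integrable_finset_sum _ fun y _ =>
      (hint k x y ν hν).mul_const _)]
    refine Finset.sum_congr rfl fun x _ => ?_
    rw [integral_finset_sum _ (fun y _ => (hint k x y ν hν).mul_const _)]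
    exact Finset.sum_congr rfl fun y _ => integral_mul_const _ _
  have htrace : ∀ M : Matrix (Fin k → ι) (Fin k → ι) ℂ,
      (M * B).trace = ∑ x : Fin k → ι, ∑ y : Fin k → ι, M x y * B y x := by
    intro M
    simp [Matrix.trace, Matrix.diag, Matrix.mul_apply]
  -- the marginals are probability measures
  have hmeasmap : ∀ n : ℕ,
      Measurable (fun ω : Fin (k + n) → Ω => ω ∘ Fin.castLE (Nat.le_add_right k n)) :=
    fun n => measurable_pi_lambda _ fun i => measurable_pi_apply _
  have hmargprob : ∀ n, IsProbabilityMeasure (marginal (Nat.le_add_right k n) (p (k + n))) := by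
    intro n
    haveI := hp (k + n)
    exact Measure.isProbabilityMeasure_map (hmeasmap n).aemeasurable
  -- Step 1: the trace against B equals the integral of F against the marginal
  have claim1 : ∀ n, (ptrace (Nat.le_add_right k n) (encode Dfun (p (k + n))) * B).trace
      = ∫ ω, F ω ∂ marginal (Nat.le_add_right k n) (p (k + n)) := by
    intro n
    haveI := hp (k + n)
    have hentry : ∀ x y : Fin k → ι,
        ptrace (Nat.le_add_right k n) (encode Dfun (p (k + n))) x y
          = ∫ ω, ∏ i, Dfun (ω i) (x i) (y i) ∂ marginal (Nat.le_add_right k n) (p (k + n)) := by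
      intro x y
      have h1 : ptrace (Nat.le_add_right k n) (encode Dfun (p (k + n))) x y
          = ∑ z : Fin (k + n - k) → ι, ∫ ω, ∏ i,
              Dfun (ω i) (extend (Nat.le_add_right k n) x z i)
                (extend (Nat.le_add_right k n) y z i) ∂ p (k + n) := rfl
      rw [h1, ← integral_finset_sum _ (fun z _ => hint (k + n) _ _ _ (hp (k + n)))]
      rw [marginal, integral_map (hmeasmap n).aemeasurable
        ((hcontProd k x y).aestronglyMeasurable)]
      refine integral_congr_ae (Filter.Eventually.of_forall fun ω => ?_)
      exact sum_extend_prod (Nat.le_add_right k n) (fun i => Dfun (ω i))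
        (fun i => (hdens (ω i)).2) x y
    rw [htrace, hexp _ (hmargprob n)]
    exact Finset.sum_congr rfl fun x _ => Finset.sum_congr rfl fun y _ => by rw [hentry]
  -- Step 2: the limit trace equals the integral of F against the product measure
  have claim2 : ∫ ω, F ω ∂ (Measure.pi fun _ : Fin k => μ)
      = (tpow (meanDensity Dfun μ) k * B).trace := by
    rw [htrace, hexp _ hpik]
    refine Finset.sum_congr rfl fun x _ => Finset.sum_congr rfl fun y _ => ?_
    congr 1
    have hprod : ∫ ω, ∏ i, Dfun (ω i) (x i) (y i) ∂ (Measure.pi fun _ : Fin k => μ)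
        = ∏ i, ∫ ωi, Dfun ωi (x i) (y i) ∂ μ := by
      letI : MeasureSpace Ω := ⟨μ⟩
      haveI : SigmaFinite (volume : Measure Ω) := by
        change SigmaFinite μ; infer_instance
      have h2 := MeasureTheory.integral_fintype_prod_eq_prod (ι := Fin k) (μ := fun _ => volume)
        (f := fun (i : Fin k) (ωi : Ω) => Dfun ωi (x i) (y i))
      exact h2
    rw [hprod]
    rfl
  -- Step 3: weak convergence of the integrals of F
  have hFcont : Continuous F := by
    rw [hF]
    exact continuous_finset_sum _ fun x _ => continuous_finset_sum _ fun y _ =>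
      (hcontProd k x y).mul continuous_const
  set C : ℝ := ∑ x : Fin k → ι, ∑ y : Fin k → ι, ‖B y x‖ with hC
  have hFbd : ∀ ω, ‖F ω‖ ≤ C := by
    intro ω
    rw [hF, hC]
    refine (norm_sum_le _ _).trans (Finset.sum_le_sum fun x _ =>
      (norm_sum_le _ _).trans (Finset.sum_le_sum fun y _ => ?_))
    rw [norm_mul]
    calc ‖∏ i, Dfun (ω i) (x i) (y i)‖ * ‖B y x‖ ≤ 1 * ‖B y x‖ := by
          refine mul_le_mul_of_nonneg_right ?_ (norm_nonneg _)
          rw [norm_prod]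
          exact Finset.prod_le_one (fun i _ => norm_nonneg _) (fun i _ => hb _ _ _)
      _ = ‖B y x‖ := one_mul _
  set fR : BoundedContinuousFunction (Fin k → Ω) ℝ :=
    BoundedContinuousFunction.ofNormedAddCommGroup (fun ω => (F ω).re)
      (Complex.continuous_re.comp hFcont) C (fun ω => by
        rw [Real.norm_eq_abs]
        exact (Complex.abs_re_le_norm _).trans (hFbd ω)) with hfR
  set fI : BoundedContinuousFunction (Fin k → Ω) ℝ :=
    BoundedContinuousFunction.ofNormedAddCommGroup (fun ω => (F ω).im)
      (Complex.continuous_im.comp hFcont) C (fun ω => by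
        rw [Real.norm_eq_abs]
        exact (Complex.abs_im_le_norm _).trans (hFbd ω)) with hfI
  have hcoe : ∀ ν : Measure (Fin k → Ω), IsProbabilityMeasure ν →
      ∫ ω, F ω ∂ν = ↑(∫ ω, fR ω ∂ν) + ↑(∫ ω, fI ω ∂ν) * Complex.I := by
    intro ν hν
    haveI := hν
    rw [← integral_coe_re_add_coe_im (hFint ν hν), integral_ofReal, integral_ofReal]
    simp only [hfR, hfI, BoundedContinuousFunction.coe_ofNormedAddCommGroup,
      RCLike.re_to_complex, RCLike.im_to_complex, RCLike.I_to_complex]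
    rfl
  have hR := hchaos k fR
  have hI := hchaos k fI
  have hend : Tendsto (fun n => ∫ ω, F ω ∂ marginal (Nat.le_add_right k n) (p (k + n)))
      atTop (nhds (∫ ω, F ω ∂ (Measure.pi fun _ : Fin k => μ))) := by
    have e1 : (fun n => ∫ ω, F ω ∂ marginal (Nat.le_add_right k n) (p (k + n)))
        = fun n => ((∫ ω, fR ω ∂ marginal (Nat.le_add_right k n) (p (k + n)) : ℝ) : ℂ) +
            ((∫ ω, fI ω ∂ marginal (Nat.le_add_right k n) (p (k + n)) : ℝ) : ℂ) * Complex.I :=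
      funext fun n => hcoe _ (hmargprob n)
    rw [e1, hcoe _ hpik]
    exact (((Complex.continuous_ofReal.tendsto _).comp hR).add
      (((Complex.continuous_ofReal.tendsto _).comp hI).mul_const _))
  simp only [claim1]
  rw [← claim2]
  exact hend


end QC
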